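/- Let L be a monolithic strongly solvable Leibniz A-algebra. Then every maximal nilpotent subalgebra U of L satisfies: either U = L², or U is a Cartan subalgebra of L (equivalently, a subalgebra complementary to L², i.e. L = L² ∔ U). -/
import Mathlib


/-- A (right) Leibniz algebra structure on an `F`-vector space `L`:
a bilinear bracket satisfying `[x,[y,z]] = [[x,y],z] - [[x,z],y]`. -/
structure LeibnizAlg (F : Type*) (L : Type*) [Field F] [AddCommGroup L] [Module F L] where
  bracket : L →ₗ[F] L →ₗ[F] L
  leibniz : ∀ x y z : L,
    bracket x (bracket y z) = bracket (bracket x y) z - bracket (bracket x z) y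

namespace LeibnizAlg

variable {F : Type*} {L : Type*} [Field F] [AddCommGroup L] [Module F L]

/-- The product `[M, N]` of two subspaces: the span of all brackets `[m, n]`. -/
def prod (A : LeibnizAlg F L) (M N : Submodule F L) : Submodule F L :=
  Submodule.span F {z : L | ∃ m ∈ M, ∃ n ∈ N, z = A.bracket m n}

/-- A subalgebra: a subspace closed under the product. -/
def IsSubalgebra (A : LeibnizAlg F L) (S : Submodule F L) : Prop :=
  A.prod S S ≤ S

/-- A (two-sided) ideal: `[I, L] ⊆ I` and `[L, I] ⊆ I`. -/
def IsIdeal (A : LeibnizAlg F L) (I : Submodule F L) : Prop :=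
  A.prod I ⊤ ≤ I ∧ A.prod ⊤ I ≤ I

/-- Lower central series of a subspace `U`: `lcs U 0 = U = U¹`,
`lcs U k = U^(k+1)`, i.e. `lcs U (k+1) = [lcs U k, U]`. -/
def lcs (A : LeibnizAlg F L) (U : Submodule F L) : ℕ → Submodule F L
  | 0 => U
  | k + 1 => A.prod (lcs A U k) U

/-- `U` is nilpotent: `U^(n+1) = 0` for some `n`. -/
def IsNilpotentSub (A : LeibnizAlg F L) (U : Submodule F L) : Prop :=
  ∃ n : ℕ, A.lcs U n = ⊥

/-- `U` is abelian: `[U, U] = 0`. -/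
def IsAbelian (A : LeibnizAlg F L) (U : Submodule F L) : Prop :=
  A.prod U U = ⊥

/-- An `A`-algebra: every nilpotent subalgebra is abelian. -/
def IsAAlgebra (A : LeibnizAlg F L) : Prop :=
  ∀ U : Submodule F L, A.IsSubalgebra U → A.IsNilpotentSub U → A.IsAbelian U

/-- Derived series: `derSeries 0 = L`, `derSeries (k+1) = [derSeries k, derSeries k]`. -/
def derSeries (A : LeibnizAlg F L) : ℕ → Submodule F L
  | 0 => ⊤
  | k + 1 => A.prod (derSeries A k) (derSeries A k)

/-- `L` is solvable: some term of the derived series vanishes. -/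
def IsSolvable (A : LeibnizAlg F L) : Prop :=
  ∃ n : ℕ, A.derSeries n = ⊥

/-- The centralizer `Z_L(U)` of a subspace `U`. -/
def centralizer (A : LeibnizAlg F L) (U : Submodule F L) : Submodule F L where
  carrier := {x : L | ∀ u ∈ U, A.bracket x u = 0 ∧ A.bracket u x = 0}
  add_mem' := by
    intro a b ha hb u hu
    refine ⟨?_, ?_⟩
    · rw [map_add, LinearMap.add_apply, (ha u hu).1, (hb u hu).1, add_zero]
    · rw [map_add, (ha u hu).2, (hb u hu).2, add_zero]
  zero_mem' := by
    intro u hu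
    refine ⟨?_, ?_⟩
    · rw [map_zero, LinearMap.zero_apply]
    · rw [map_zero]
  smul_mem' := by
    intro c a ha u hu
    refine ⟨?_, ?_⟩
    · rw [map_smul, LinearMap.smul_apply, (ha u hu).1, smul_zero]
    · rw [map_smul, (ha u hu).2, smul_zero]

/-- The centre of the subalgebra `M`: elements of `M` centralizing `M`. -/
def centerOf (A : LeibnizAlg F L) (M : Submodule F L) : Submodule F L :=
  M ⊓ A.centralizer M

/-- `N` is the nilradical: the largest nilpotent ideal. -/
def IsNilradical (A : LeibnizAlg F L) (N : Submodule F L) : Prop :=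
  A.IsIdeal N ∧ A.IsNilpotentSub N ∧
    ∀ I : Submodule F L, A.IsIdeal I → A.IsNilpotentSub I → I ≤ N

/-- A minimal ideal: a nonzero ideal containing no ideal other than `0` and itself. -/
def IsMinimalIdeal (A : LeibnizAlg F L) (I : Submodule F L) : Prop :=
  A.IsIdeal I ∧ I ≠ ⊥ ∧ ∀ J : Submodule F L, A.IsIdeal J → J ≤ I → J = ⊥ ∨ J = I

/-- A maximal subalgebra. -/
def IsMaximalSubalgebra (A : LeibnizAlg F L) (M : Submodule F L) : Prop :=
  A.IsSubalgebra M ∧ M ≠ ⊤ ∧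
    ∀ S : Submodule F L, A.IsSubalgebra S → M ≤ S → S = M ∨ S = ⊤

/-- `L` is φ-free: every ideal contained in all maximal subalgebras is zero. -/
def IsPhiFree (A : LeibnizAlg F L) : Prop :=
  ∀ I : Submodule F L, A.IsIdeal I →
    (∀ M : Submodule F L, A.IsMaximalSubalgebra M → I ≤ M) → I = ⊥

/-- `Asoc L`: the sum of the abelian minimal ideals. -/
def asoc (A : LeibnizAlg F L) : Submodule F L :=
  sSup {I : Submodule F L | A.IsMinimalIdeal I ∧ A.IsAbelian I}

/-- A Cartan subalgebra: a nilpotent, self-normalizing subalgebra. -/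
def IsCartan (A : LeibnizAlg F L) (C : Submodule F L) : Prop :=
  A.IsSubalgebra C ∧ A.IsNilpotentSub C ∧
    ∀ x : L, (∀ c ∈ C, A.bracket x c ∈ C ∧ A.bracket c x ∈ C) → x ∈ C

/-- A maximal nilpotent subalgebra. -/
def IsMaxNilpotentSubalgebra (A : LeibnizAlg F L) (U : Submodule F L) : Prop :=
  A.IsSubalgebra U ∧ A.IsNilpotentSub U ∧
    ∀ V : Submodule F L, A.IsSubalgebra V → A.IsNilpotentSub V → U ≤ V → V = U

end LeibnizAlg
namespace LeibnizAlg

variable {F : Type*} {L : Type*} [Field F] [AddCommGroup L] [Module F L]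

lemma mem_prod' (A : LeibnizAlg F L) {M N : Submodule F L} {m n : L}
    (hm : m ∈ M) (hn : n ∈ N) : A.bracket m n ∈ A.prod M N :=
  Submodule.subset_span ⟨m, hm, n, hn, rfl⟩

lemma prod_le_iff' (A : LeibnizAlg F L) {M N P : Submodule F L} :
    A.prod M N ≤ P ↔ ∀ m ∈ M, ∀ n ∈ N, A.bracket m n ∈ P := by
  constructor
  · intro h m hm n hn; exact h (A.mem_prod' hm hn)
  · intro h
    apply Submodule.span_le.mpr
    rintro z ⟨m, hm, n, hn, rfl⟩
    exact h m hm n hn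

lemma prod_mono' (A : LeibnizAlg F L) {M M' N N' : Submodule F L}
    (hM : M ≤ M') (hN : N ≤ N') : A.prod M N ≤ A.prod M' N' :=
  (A.prod_le_iff').mpr fun m hm n hn => A.mem_prod' (hM hm) (hN hn)

lemma der1_eq (A : LeibnizAlg F L) : A.derSeries 1 = A.prod ⊤ ⊤ := rfl

lemma bracket_mem_der1 (A : LeibnizAlg F L) (x y : L) :
    A.bracket x y ∈ A.derSeries 1 :=
  A.mem_prod' Submodule.mem_top Submodule.mem_top

lemma exists_minimal_ideal_le (A : LeibnizAlg F L) [FiniteDimensional F L] :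
    ∀ I : Submodule F L, A.IsIdeal I → I ≠ ⊥ → ∃ J, A.IsMinimalIdeal J ∧ J ≤ I := by
  suffices h : ∀ n : ℕ, ∀ I : Submodule F L, Module.finrank F I ≤ n →
      A.IsIdeal I → I ≠ ⊥ → ∃ J, A.IsMinimalIdeal J ∧ J ≤ I by
    intro I hI hIne
    exact h (Module.finrank F I) I le_rfl hI hIne
  intro n
  induction n with
  | zero =>
    intro I hrk hI hIne
    exact absurd (Submodule.finrank_eq_zero.mp (Nat.le_zero.mp hrk)) hIne
  | succ n ih =>
    intro I hrk hI hIne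
    by_cases hmin : ∀ J : Submodule F L, A.IsIdeal J → J ≤ I → J = ⊥ ∨ J = I
    · exact ⟨I, ⟨hI, hIne, hmin⟩, le_rfl⟩
    · push_neg at hmin
      obtain ⟨J, hJ, hJI, hJne, hJneI⟩ := hmin
      have hlt : Module.finrank F J < Module.finrank F I :=
        Submodule.finrank_lt_finrank_of_lt (lt_of_le_of_ne hJI hJneI)
      obtain ⟨K, hK, hKJ⟩ := ih J (Nat.le_of_lt_succ (lt_of_lt_of_le hlt hrk)) hJ hJne
      exact ⟨K, hK, hKJ.trans hJI⟩

end LeibnizAlg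
namespace LeibnizAlg

variable {F : Type*} {L : Type*} [Field F] [AddCommGroup L] [Module F L]

lemma pow_flip_mem (A : LeibnizAlg F L) (x : L) (k : ℕ) {b : L}
    (hb : b ∈ A.derSeries 1) : ((A.bracket.flip x) ^ k) b ∈ A.derSeries 1 := by
  induction k with
  | zero => simpa using hb
  | succ k ih =>
    rw [pow_succ', Module.End.mul_apply]
    simpa using A.bracket_mem_der1 (((A.bracket.flip x) ^ k) b) x

lemma flip_bracket_right (A : LeibnizAlg F L)
    (hBab : ∀ b ∈ A.derSeries 1, ∀ b' ∈ A.derSeries 1, A.bracket b b' = 0)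
    {b : L} (hb : b ∈ A.derSeries 1) (x y : L) :
    A.bracket (A.bracket b y) x = A.bracket (A.bracket b x) y := by
  have h := A.leibniz b y x
  rw [hBab b hb _ (A.bracket_mem_der1 y x)] at h
  exact sub_eq_zero.mp h.symm

lemma flip_bracket_left (A : LeibnizAlg F L)
    (hBab : ∀ b ∈ A.derSeries 1, ∀ b' ∈ A.derSeries 1, A.bracket b b' = 0)
    {b : L} (hb : b ∈ A.derSeries 1) (x y : L) :
    A.bracket (A.bracket y b) x = A.bracket y (A.bracket b x) := by
  have h := A.leibniz y b x
  rw [hBab _ (A.bracket_mem_der1 y x) b hb, sub_zero] at h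
  exact h.symm

lemma pow_flip_bracket_right (A : LeibnizAlg F L)
    (hBab : ∀ b ∈ A.derSeries 1, ∀ b' ∈ A.derSeries 1, A.bracket b b' = 0)
    (x : L) (k : ℕ) {b : L} (hb : b ∈ A.derSeries 1) (y : L) :
    ((A.bracket.flip x) ^ k) (A.bracket b y)
      = A.bracket (((A.bracket.flip x) ^ k) b) y := by
  induction k with
  | zero => simp
  | succ k ih =>
    rw [pow_succ', Module.End.mul_apply, Module.End.mul_apply, ih]
    have := A.flip_bracket_right hBab (A.pow_flip_mem x k hb) x y
    simpa using this

lemma pow_flip_bracket_left (A : LeibnizAlg F L)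
    (hBab : ∀ b ∈ A.derSeries 1, ∀ b' ∈ A.derSeries 1, A.bracket b b' = 0)
    (x : L) (k : ℕ) {b : L} (hb : b ∈ A.derSeries 1) (y : L) :
    ((A.bracket.flip x) ^ k) (A.bracket y b)
      = A.bracket y (((A.bracket.flip x) ^ k) b) := by
  induction k with
  | zero => simp
  | succ k ih =>
    rw [pow_succ', Module.End.mul_apply, Module.End.mul_apply, ih]
    have := A.flip_bracket_left hBab (A.pow_flip_mem x k hb) x y
    simpa using this

lemma dichotomy (A : LeibnizAlg F L) [FiniteDimensional F L]
    (hBab : ∀ b ∈ A.derSeries 1, ∀ b' ∈ A.derSeries 1, A.bracket b b' = 0)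
    (W : Submodule F L) (hWne : W ≠ ⊥)
    (hWle : ∀ I : Submodule F L, A.IsIdeal I → I ≠ ⊥ → W ≤ I)
    (x : L) :
    (Submodule.map ((A.bracket.flip x) ^ Module.finrank F L) (A.derSeries 1) = ⊥) ∨
    (∀ b ∈ A.derSeries 1, A.bracket b x = 0 → b = 0) := by
  set n := Module.finrank F L with hn
  set fx := A.bracket.flip x with hfx
  set B := A.derSeries 1 with hBdef
  by_cases hK : B ⊓ LinearMap.ker (fx ^ n) = ⊥
  · right
    intro b hb hb0
    have : Nontrivial L := by
      obtain ⟨w, _, hw0⟩ := (Submodule.ne_bot_iff W).mp hWne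
      exact nontrivial_of_ne w 0 hw0
    have hn1 : 1 ≤ n := Module.finrank_pos
    obtain ⟨m, hm⟩ : ∃ m, n = m + 1 := ⟨n - 1, (Nat.succ_pred_eq_of_pos hn1).symm⟩
    have hker : b ∈ LinearMap.ker (fx ^ n) := by
      rw [LinearMap.mem_ker, hm, pow_succ, Module.End.mul_apply]
      have : fx b = 0 := by simpa [hfx] using hb0
      rw [this, map_zero]
    have hmem : b ∈ B ⊓ LinearMap.ker (fx ^ n) := ⟨hb, hker⟩
    rw [hK] at hmem
    simpa using hmem
  · left
    by_contra hI
    have hKideal : A.IsIdeal (B ⊓ LinearMap.ker (fx ^ n)) := by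
      constructor
      · rw [prod_le_iff']
        rintro m ⟨hmB, hmk⟩ y -
        refine ⟨A.bracket_mem_der1 m y, ?_⟩
        simp only [SetLike.mem_coe, LinearMap.mem_ker] at hmk ⊢
        rw [A.pow_flip_bracket_right hBab x n hmB y, hmk]
        simp
      · rw [prod_le_iff']
        rintro y - m ⟨hmB, hmk⟩
        refine ⟨A.bracket_mem_der1 y m, ?_⟩
        simp only [SetLike.mem_coe, LinearMap.mem_ker] at hmk ⊢
        rw [A.pow_flip_bracket_left hBab x n hmB y, hmk, map_zero]
    have hIideal : A.IsIdeal (Submodule.map (fx ^ n) B) := by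
      constructor
      · rw [prod_le_iff']
        rintro m ⟨b, hb, rfl⟩ y -
        exact ⟨A.bracket b y, A.bracket_mem_der1 b y,
          A.pow_flip_bracket_right hBab x n hb y⟩
      · rw [prod_le_iff']
        rintro y - m ⟨b, hb, rfl⟩
        exact ⟨A.bracket y b, A.bracket_mem_der1 y b,
          A.pow_flip_bracket_left hBab x n hb y⟩
    have h1 := hWle _ hKideal hK
    have h2 := hWle _ hIideal hI
    obtain ⟨w, hwW, hw0⟩ := (Submodule.ne_bot_iff W).mp hWne
    obtain ⟨hwB, hwk⟩ := h1 hwW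
    obtain ⟨b, hbB, hbw⟩ := h2 hwW
    have hb2 : b ∈ LinearMap.ker (fx ^ (n + n)) := by
      rw [LinearMap.mem_ker, pow_add, Module.End.mul_apply, hbw]
      exact LinearMap.mem_ker.mp hwk
    have hstab : LinearMap.ker (fx ^ (n + n)) = LinearMap.ker (fx ^ n) := by
      rw [hn]
      exact Module.End.ker_pow_eq_ker_pow_finrank_of_le (Nat.le_add_right _ _)
    rw [hstab, LinearMap.mem_ker] at hb2
    exact hw0 (by rw [← hbw, hb2])

lemma centralizes_of_nilpotent_action (A : LeibnizAlg F L) [FiniteDimensional F L]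
    (hA : A.IsAAlgebra)
    (hBab : ∀ b ∈ A.derSeries 1, ∀ b' ∈ A.derSeries 1, A.bracket b b' = 0)
    (x : L)
    (hnil : Submodule.map ((A.bracket.flip x) ^ Module.finrank F L) (A.derSeries 1) = ⊥) :
    ∀ b ∈ A.derSeries 1, A.bracket b x = 0 ∧ A.bracket x b = 0 := by
  set n := Module.finrank F L with hn
  set fx := A.bracket.flip x with hfx
  set B := A.derSeries 1 with hBdef
  set T := B ⊔ Submodule.span F {x} with hT
  have hxT : x ∈ T := Submodule.mem_sup_right (Submodule.mem_span_singleton_self x)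
  have hBT : B ≤ T := le_sup_left
  have hTsub : A.IsSubalgebra T :=
    le_trans ((A.prod_le_iff').mpr fun m _ n' _ => A.bracket_mem_der1 m n') hBT
  have hlcs : ∀ k, A.lcs T (k + 1) ≤ Submodule.map (fx ^ k) B := by
    intro k
    induction k with
    | zero =>
      show A.prod T T ≤ _
      refine le_trans ((A.prod_le_iff').mpr fun m _ n' _ => A.bracket_mem_der1 m n') ?_
      rw [pow_zero, Module.End.one_eq_id, Submodule.map_id]
    | succ k ih =>
      show A.prod (A.lcs T (k + 1)) T ≤ _
      refine le_trans (A.prod_mono' ih le_rfl) ?_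
      rw [prod_le_iff']
      rintro m ⟨b, hb, rfl⟩ t ht
      rw [hT, Submodule.mem_sup] at ht
      obtain ⟨b', hb', s, hs, rfl⟩ := ht
      obtain ⟨c, rfl⟩ := Submodule.mem_span_singleton.mp hs
      have h1 : A.bracket ((fx ^ k) b) b' = 0 := hBab _ (A.pow_flip_mem x k hb) b' hb'
      have heq : A.bracket ((fx ^ k) b) (b' + c • x) = c • ((fx ^ (k + 1)) b) := by
        rw [map_add, h1, zero_add, map_smul, pow_succ', Module.End.mul_apply,
          LinearMap.flip_apply]
      rw [heq]
      exact Submodule.smul_mem _ c ⟨b, hb, rfl⟩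
  have hTnil : A.IsNilpotentSub T := ⟨n + 1, le_bot_iff.mp (le_trans (hlcs n) hnil.le)⟩
  have hTab := hA T hTsub hTnil
  intro b hb
  constructor
  · have h := A.mem_prod' (hBT hb) hxT
    rw [hTab] at h
    simpa using h
  · have h := A.mem_prod' hxT (hBT hb)
    rw [hTab] at h
    simpa using h

end LeibnizAlg
/-- Let `L` be a monolithic strongly solvable Leibniz A-algebra.  Then
every maximal nilpotent subalgebra `U` of `L` satisfies: either `U = L²`, or `U` is a
Cartan subalgebra of `L` (equivalently, a subalgebra complementary to `L²`, i.e.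
`L = L² ∔ U`). -/
theorem monolithic_strongly_solvable_max_nilpotent
    {F L : Type*} [Field F] [AddCommGroup L] [Module F L] [FiniteDimensional F L]
    (A : LeibnizAlg F L) (hA : A.IsAAlgebra)
    (hss : A.IsNilpotentSub (A.derSeries 1))
    (W : Submodule F L) (hW : A.IsMinimalIdeal W)
    (hmono : ∀ I : Submodule F L, A.IsMinimalIdeal I → I = W)
    (U : Submodule F L) (hU : A.IsMaxNilpotentSubalgebra U) :
    U = A.derSeries 1 ∨
      (A.IsCartan U ∧ A.derSeries 1 ⊓ U = ⊥ ∧ A.derSeries 1 ⊔ U = ⊤) := by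
  classical
  have hbr : ∀ x y : L, A.bracket x y ∈ A.derSeries 1 := A.bracket_mem_der1
  have hBsub : A.IsSubalgebra (A.derSeries 1) :=
    le_trans (A.prod_mono' le_top le_top) (A.der1_eq).ge
  have hBab : ∀ b ∈ A.derSeries 1, ∀ b' ∈ A.derSeries 1, A.bracket b b' = 0 := by
    intro b hb b' hb'
    have h := hA _ hBsub hss
    have hm := A.mem_prod' hb hb'
    rw [h] at hm; simpa using hm
  have hUab : ∀ u ∈ U, ∀ u' ∈ U, A.bracket u u' = 0 := by
    intro u hu u' hu'
    have h := hA U hU.1 hU.2.1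
    have hm := A.mem_prod' hu hu'
    rw [h] at hm; simpa using hm
  by_cases hB : A.derSeries 1 = ⊥
  · right
    have htopnil : A.IsNilpotentSub (⊤ : Submodule F L) :=
      ⟨1, by rw [show A.lcs ⊤ 1 = A.derSeries 1 from rfl, hB]⟩
    have hUtop : (⊤ : Submodule F L) = U := hU.2.2 ⊤ le_top htopnil le_top
    refine ⟨⟨hU.1, hU.2.1, ?_⟩, ?_, ?_⟩
    · intro x _; rw [← hUtop]; trivial
    · rw [hB]; simp
    · rw [hB, ← hUtop]; simp
  have hWne : W ≠ ⊥ := hW.2.1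
  have hWle : ∀ I : Submodule F L, A.IsIdeal I → I ≠ ⊥ → W ≤ I := by
    intro I hI hIne
    obtain ⟨J, hJ, hJI⟩ := A.exists_minimal_ideal_le I hI hIne
    exact (hmono J hJ) ▸ hJI
  have hBideal : A.IsIdeal (A.derSeries 1) :=
    ⟨(A.prod_le_iff').mpr fun m _ y _ => hbr m y,
     (A.prod_le_iff').mpr fun y _ m _ => hbr y m⟩
  have hWB : W ≤ A.derSeries 1 := hWle _ hBideal hB
  have surjB : ∀ x : L, (∀ b ∈ A.derSeries 1, A.bracket b x = 0 → b = 0) →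
      ∀ v ∈ A.derSeries 1, ∃ b ∈ A.derSeries 1, A.bracket b x = v := by
    intro x hinj v hv
    have hfB : ∀ b ∈ A.derSeries 1, A.bracket.flip x b ∈ A.derSeries 1 :=
      fun b _ => hbr b x
    set g := (A.bracket.flip x).restrict hfB with hg
    have hginj : Function.Injective g := by
      intro a b hab
      have hval : A.bracket (a : L) x = A.bracket (b : L) x := by
        have := congrArg Subtype.val hab
        simpa [hg, LinearMap.restrict_apply] using this
      have h1 : A.bracket ((a : L) - b) x = 0 := by
        rw [map_sub, LinearMap.sub_apply, hval, sub_self]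
      have h0 := hinj _ (Submodule.sub_mem _ a.2 b.2) h1
      exact Subtype.ext (sub_eq_zero.mp h0)
    have hgsurj : Function.Surjective g := LinearMap.injective_iff_surjective.mp hginj
    obtain ⟨b, hb⟩ := hgsurj ⟨v, hv⟩
    refine ⟨b, b.2, ?_⟩
    have := congrArg Subtype.val hb
    simpa [hg, LinearMap.restrict_apply] using this
  by_cases hex : ∃ x ∈ U, ∀ b ∈ A.derSeries 1, A.bracket b x = 0 → b = 0
  · obtain ⟨x, hxU, hinj⟩ := hex
    right
    have hKsub : A.IsSubalgebra (LinearMap.ker (A.bracket.flip x)) := by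
      refine (A.prod_le_iff').mpr ?_
      intro m hm n' hn'
      rw [LinearMap.mem_ker] at hm hn' ⊢
      simp only [LinearMap.flip_apply] at hm hn' ⊢
      have h := A.leibniz m n' x
      rw [hn', hm] at h
      simpa using h.symm
    have hKnil : A.IsNilpotentSub (LinearMap.ker (A.bracket.flip x)) := by
      refine ⟨1, ?_⟩
      rw [show A.lcs (LinearMap.ker (A.bracket.flip x)) 1
            = A.prod (LinearMap.ker (A.bracket.flip x)) (LinearMap.ker (A.bracket.flip x))
          from rfl, eq_bot_iff]
      refine (A.prod_le_iff').mpr ?_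
      intro m hm n' hn'
      have hker := hKsub (A.mem_prod' hm hn')
      have h0 : A.bracket m n' = 0 := by
        apply hinj _ (hbr m n')
        simpa using (LinearMap.mem_ker.mp hker)
      rw [h0]; exact Submodule.zero_mem ⊥
    have hKU : LinearMap.ker (A.bracket.flip x) = U := by
      apply hU.2.2 _ hKsub hKnil
      intro u hu
      rw [LinearMap.mem_ker, LinearMap.flip_apply]
      exact hUab u hu x hxU
    have hinf : A.derSeries 1 ⊓ U = ⊥ := by
      rw [eq_bot_iff]
      intro v hv
      rw [Submodule.mem_inf] at hv
      have := hinj v hv.1 (hUab v hv.2 x hxU)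
      simp [this]
    have hsup : A.derSeries 1 ⊔ U = ⊤ := by
      rw [eq_top_iff]
      rintro y -
      obtain ⟨b, hbB, hbx⟩ := surjB x hinj (A.bracket y x) (hbr y x)
      have hyb : y - b ∈ U := by
        rw [← hKU, LinearMap.mem_ker, LinearMap.flip_apply, map_sub,
          LinearMap.sub_apply, hbx, sub_self]
      refine Submodule.mem_sup.mpr ⟨b, hbB, y - b, hyb, ?_⟩
      abel
    refine ⟨⟨hU.1, hU.2.1, ?_⟩, hinf, hsup⟩
    intro y hy
    have h0 : A.bracket y x = 0 := by
      have hm : A.bracket y x ∈ A.derSeries 1 ⊓ U :=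
        Submodule.mem_inf.mpr ⟨hbr y x, (hy x hxU).1⟩
      rw [hinf] at hm; simpa using hm
    rw [← hKU, LinearMap.mem_ker, LinearMap.flip_apply]
    exact h0
  · push_neg at hex
    have hcent : ∀ x ∈ U, ∀ b ∈ A.derSeries 1, A.bracket b x = 0 ∧ A.bracket x b = 0 := by
      intro x hx
      rcases A.dichotomy hBab W hWne hWle x with h | h
      · exact A.centralizes_of_nilpotent_action hA hBab x h
      · obtain ⟨b, hb, hb0, hbne⟩ := hex x hx
        exact absurd (h b hb hb0) hbne
    left
    have hBU : A.derSeries 1 ≤ U := by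
      have hTsub : A.IsSubalgebra (U ⊔ A.derSeries 1) :=
        le_trans ((A.prod_le_iff').mpr fun m _ y _ => hbr m y) le_sup_right
      have hTnil : A.IsNilpotentSub (U ⊔ A.derSeries 1) := by
        refine ⟨1, ?_⟩
        rw [show A.lcs (U ⊔ A.derSeries 1) 1
              = A.prod (U ⊔ A.derSeries 1) (U ⊔ A.derSeries 1) from rfl,
          eq_bot_iff]
        refine (A.prod_le_iff').mpr ?_
        intro t ht t' ht'
        obtain ⟨u, hu, b, hb, rfl⟩ := Submodule.mem_sup.mp ht
        obtain ⟨u', hu', b', hb', rfl⟩ := Submodule.mem_sup.mp ht'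
        have h0 : A.bracket (u + b) (u' + b') = 0 := by
          simp only [map_add, LinearMap.add_apply, hUab u hu u' hu',
            (hcent u hu b' hb').2, (hcent u' hu' b hb).1, hBab b hb b' hb',
            add_zero, zero_add]
        rw [h0]; exact Submodule.zero_mem ⊥
      have heq := hU.2.2 _ hTsub hTnil le_sup_left
      exact le_trans le_sup_right heq.le
    by_cases hex2 : ∃ x : L, ∀ b ∈ A.derSeries 1, A.bracket b x = 0 → b = 0
    · obtain ⟨x0, hinj⟩ := hex2
      have hUB : U ≤ A.derSeries 1 := by
        intro z hz
        obtain ⟨b, hbB, hbx⟩ := surjB x0 hinj (A.bracket z x0) (hbr z x0)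
        set z' := z - b with hz'
        have hz'x : A.bracket z' x0 = 0 := by
          rw [hz', map_sub, LinearMap.sub_apply, hbx, sub_self]
        have hcz' : ∀ c ∈ A.derSeries 1, A.bracket c z' = 0 ∧ A.bracket z' c = 0 := by
          intro c hc
          constructor
          · rw [hz', map_sub, (hcent z hz c hc).1, hBab c hc b hbB, sub_self]
          · rw [hz', map_sub, LinearMap.sub_apply, (hcent z hz c hc).2,
              hBab b hbB c hc, sub_self]
        have hx0z' : A.bracket x0 z' = 0 := by
          have h := A.leibniz x0 z' x0
          rw [hz'x, (hcz' _ (hbr x0 x0)).1] at h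
          have h' : A.bracket (A.bracket x0 z') x0 = 0 := by simpa using h.symm
          exact hinj _ (hbr x0 z') h'
        have hz'y : ∀ y, A.bracket z' y = 0 := by
          intro y
          have h := A.leibniz z' y x0
          rw [hz'x, (hcz' _ (hbr y x0)).2] at h
          have h' : A.bracket (A.bracket z' y) x0 = 0 := by simpa using h.symm
          exact hinj _ (hbr z' y) h'
        have hyz' : ∀ y, A.bracket y z' = 0 := by
          intro y
          have h := A.leibniz y z' x0
          rw [hz'x, (hcz' _ (hbr y x0)).1] at h
          have h' : A.bracket (A.bracket y z') x0 = 0 := by simpa using h.symm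
          exact hinj _ (hbr y z') h'
        by_cases hz0 : z' = 0
        · have hzb : z = b := by rwa [hz', sub_eq_zero] at hz0
          rw [hzb]; exact hbB
        · have hideal : A.IsIdeal (Submodule.span F {z'}) := by
            constructor
            · refine (A.prod_le_iff').mpr ?_
              rintro m hm y -
              obtain ⟨c, rfl⟩ := Submodule.mem_span_singleton.mp hm
              rw [map_smul, LinearMap.smul_apply, hz'y y, smul_zero]
              exact Submodule.zero_mem _
            · refine (A.prod_le_iff').mpr ?_
              rintro y - m hm
              obtain ⟨c, rfl⟩ := Submodule.mem_span_singleton.mp hm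
              rw [map_smul, hyz' y, smul_zero]
              exact Submodule.zero_mem _
          have hspan_ne : Submodule.span F {z'} ≠ ⊥ := by
            simpa [Submodule.span_singleton_eq_bot] using hz0
          have hWz := hWle _ hideal hspan_ne
          obtain ⟨w, hwW, hw0⟩ := (Submodule.ne_bot_iff W).mp hWne
          obtain ⟨c, hc⟩ := Submodule.mem_span_singleton.mp (hWz hwW)
          have hcne : c ≠ 0 := by
            rintro rfl
            rw [zero_smul] at hc
            exact hw0 hc.symm
          have hz'W : z' ∈ W := by
            have hrw : z' = c⁻¹ • w := by
              rw [← hc, smul_smul, inv_mul_cancel₀ hcne, one_smul]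
            rw [hrw]; exact Submodule.smul_mem _ _ hwW
          have hz'B : z' ∈ A.derSeries 1 := hWB hz'W
          have hzz : z = z' + b := by rw [hz']; abel
          rw [hzz]; exact Submodule.add_mem _ hz'B hbB
      exact le_antisymm hUB hBU
    · exfalso
      push_neg at hex2
      have hcent' : ∀ x : L, ∀ b ∈ A.derSeries 1, A.bracket b x = 0 ∧ A.bracket x b = 0 := by
        intro x
        rcases A.dichotomy hBab W hWne hWle x with h | h
        · exact A.centralizes_of_nilpotent_action hA hBab x h
        · obtain ⟨b, hb, h1, h2⟩ := hex2 x
          exact absurd (h b hb h1) h2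
      have h2 : A.lcs ⊤ 2 = ⊥ := by
        rw [show A.lcs ⊤ 2 = A.prod (A.prod ⊤ ⊤) ⊤ from rfl, eq_bot_iff]
        refine (A.prod_le_iff').mpr ?_
        rintro m hm y -
        have hmB : m ∈ A.derSeries 1 := by rw [A.der1_eq]; exact hm
        rw [(hcent' y m hmB).1]
        exact Submodule.zero_mem ⊥
      have htopab := hA ⊤ le_top ⟨2, h2⟩
      exact hB ((A.der1_eq).trans htopab)
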